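/- Let h be a Lie algebra acting on an L∞ algebra g with κ: h → g^1 and action maps ▷. For h ∈ ker κ the induced action on the graded Lie algebra H(g) acts by derivations: h▷[x̄_1, x̄_2] = [h▷x̄_1, x̄_2] + [x̄_1, h▷x̄_2] for all cohomology classes x̄_1, x̄_2 ∈ H(g). -/
import Mathlib

theorem kernel_acts_by_derivations_on_cohomology
    {K V : Type} [Field K] [CharZero K] [AddCommGroup V] [Module K V]
    (A : Type) [LieRing A] [LieAlgebra K A]
    (d : V →ₗ[K] V) (b2 : V → V → V) (t3 : V → V → V → V)
    (κ : A →ₗ[K] V) (act : A → V → V) (act2 : A → V → V → V)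
    (hcompat : ∀ (a : A) (x₁ x₂ : V),
      act2 a (d x₁) x₂ + act2 a x₁ (d x₂) + act a (b2 x₁ x₂) =
        -(t3 (κ a) x₁ x₂) + b2 (act a x₁) x₂ + b2 x₁ (act a x₂) - d (act2 a x₁ x₂))
    (ht3zero : ∀ x y : V, t3 0 x y = 0)
    (hact2zeroL : ∀ (a : A) (y : V), act2 a 0 y = 0)
    (hact2zeroR : ∀ (a : A) (y : V), act2 a y 0 = 0) :
    ∀ (a : A) (x₁ x₂ : V), κ a = 0 → d x₁ = 0 → d x₂ = 0 →
      act a (b2 x₁ x₂) - b2 (act a x₁) x₂ - b2 x₁ (act a x₂) ∈ LinearMap.range d := by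
  intro a x₁ x₂ hκ h1 h2
  refine ⟨-(act2 a x₁ x₂), ?_⟩
  have h := hcompat a x₁ x₂
  rw [hκ, h1, h2, ht3zero, hact2zeroL, hact2zeroR] at h
  simp only [zero_add, neg_zero, neg_zero, zero_sub] at h ⊢
  rw [map_neg, h]
  abel
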